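/- Fix integer x_min ≥ 1 and data x_1,…,x_n with each x_i ≥ x_min an integer and at least one x_i > x_min. Then for every r ≥ 0, the integral ∫_1^∞ α^r (α−1)^{−1} ζ(α, x_min)^{−n} Π_{i=1}^n x_i^{−α} dα is finite. -/

import Mathlib

open Set MeasureTheory Filter Real Topology

private lemma stmt6_summable (m : ℕ) {α : ℝ} (hα : 1 < α) :
    Summable (fun k : ℕ => ((k + m : ℕ) : ℝ) ^ (-α)) :=
  (summable_nat_add_iff m).2 (Real.summable_nat_rpow.2 (by linarith))

private lemma stmt6_lb (m : ℕ) (hm : 1 ≤ m) {α : ℝ} (hα : 1 < α) :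
    (m : ℝ) ^ (1 - α) / (α - 1) ≤ ∑' k : ℕ, ((k + m : ℕ) : ℝ) ^ (-α) := by
  have hM : (1 : ℝ) ≤ (m : ℝ) := by exact_mod_cast hm
  have hM0 : (0 : ℝ) < (m : ℝ) := by linarith
  have hneg : -α < -1 := by linarith
  have hint : IntegrableOn (fun t : ℝ => t ^ (-α)) (Ioi (m : ℝ)) :=
    integrableOn_Ioi_rpow_of_lt hneg hM0
  have hsum := stmt6_summable m hα
  have hstep : ∀ N : ℕ, (∫ t in (m : ℝ)..((m : ℝ) + N), t ^ (-α)) ≤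
      ∑' k : ℕ, ((k + m : ℕ) : ℝ) ^ (-α) := by
    intro N
    have hanti : AntitoneOn (fun t : ℝ => t ^ (-α)) (Icc (m : ℝ) ((m : ℝ) + N)) := by
      refine (Real.antitoneOn_rpow_Ioi_of_exponent_nonpos (by linarith)).mono ?_
      intro t ht
      exact lt_of_lt_of_le hM0 ht.1
    calc (∫ t in (m : ℝ)..((m : ℝ) + N), t ^ (-α))
        ≤ ∑ i ∈ Finset.range N, ((m : ℝ) + i) ^ (-α) := hanti.integral_le_sum
      _ = ∑ i ∈ Finset.range N, ((i + m : ℕ) : ℝ) ^ (-α) := by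
          refine Finset.sum_congr rfl fun i _ => ?_
          congr 1
          push_cast; ring
      _ ≤ ∑' k : ℕ, ((k + m : ℕ) : ℝ) ^ (-α) :=
          Summable.sum_le_tsum _ (fun k _ => Real.rpow_nonneg (by positivity) _) hsum
  have htend : Tendsto (fun N : ℕ => ∫ t in (m : ℝ)..((m : ℝ) + N), t ^ (-α)) atTop
      (𝓝 (∫ t in Ioi (m : ℝ), t ^ (-α))) :=
    intervalIntegral_tendsto_integral_Ioi _ hint
      (tendsto_atTop_add_const_left _ _ tendsto_natCast_atTop_atTop)
  have hle : (∫ t in Ioi (m : ℝ), t ^ (-α)) ≤ ∑' k : ℕ, ((k + m : ℕ) : ℝ) ^ (-α) :=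
    le_of_tendsto htend (Filter.Eventually.of_forall hstep)
  have heval : (∫ t in Ioi (m : ℝ), t ^ (-α)) = (m : ℝ) ^ (1 - α) / (α - 1) := by
    rw [integral_Ioi_rpow_of_lt hneg hM0, show -α + 1 = -(α - 1) by ring, neg_div_neg_eq,
      show -(α - 1) = 1 - α by ring]
  linarith

theorem stmt6 (x_min : ℕ) (hxm : 1 ≤ x_min) (n : ℕ) (x : Fin n → ℕ)
    (hx : ∀ i, x_min ≤ x i) (hx' : ∃ i, x_min < x i) (r : ℝ) (hr : 0 ≤ r) :
    MeasureTheory.IntegrableOn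
      (fun α : ℝ => α ^ r * (α - 1)⁻¹
        * ((∑' k : ℕ, ((k + x_min : ℕ) : ℝ) ^ (-α)) ^ n)⁻¹ * ∏ i, (x i : ℝ) ^ (-α))
      (Set.Ioi 1) := by
  obtain ⟨i₀, hi₀⟩ := hx'
  have hn : n ≠ 0 := fun h => by subst h; exact i₀.elim0
  obtain ⟨n', rfl⟩ : ∃ n'', n = n'' + 1 := ⟨n - 1, (Nat.succ_pred_eq_of_ne_zero hn).symm⟩
  set m := x_min with hm
  have hM : (1 : ℝ) ≤ (m : ℝ) := by exact_mod_cast hxm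
  have hM0 : (0 : ℝ) < (m : ℝ) := by linarith
  set S : ℝ → ℝ := fun α => ∑' k : ℕ, ((k + m : ℕ) : ℝ) ^ (-α) with hS
  set f : ℝ → ℝ := fun α => α ^ r * (α - 1)⁻¹ * (S α ^ (n' + 1))⁻¹ * ∏ i, (x i : ℝ) ^ (-α)
    with hf
  have hxpos : ∀ i, (0 : ℝ) < (x i : ℝ) := fun i => by
    have := hx i; have : (1:ℝ) ≤ (x i : ℝ) := by exact_mod_cast le_trans hxm this
    linarith
  have hx1 : ∀ i, (1 : ℝ) ≤ (x i : ℝ) := fun i => by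
    exact_mod_cast le_trans hxm (hx i)
  -- nonnegativity and positivity of S
  have hSpos : ∀ {α : ℝ}, 1 < α → 0 < S α := by
    intro α hα
    have := stmt6_lb m hxm hα
    have h0 : (0:ℝ) < (m:ℝ) ^ (1 - α) / (α - 1) := by
      apply div_pos (Real.rpow_pos_of_pos hM0 _) (by linarith)
    linarith
  have hPnonneg : ∀ α : ℝ, (0:ℝ) ≤ ∏ i, (x i : ℝ) ^ (-α) := fun α =>
    Finset.prod_nonneg fun i _ => Real.rpow_nonneg (hxpos i).le _
  have hfnonneg : ∀ {α : ℝ}, 1 < α → 0 ≤ f α := by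
    intro α hα
    have h1 : (0:ℝ) ≤ α ^ r := Real.rpow_nonneg (by linarith) _
    have h2 : (0:ℝ) ≤ (α - 1)⁻¹ := inv_nonneg.2 (by linarith)
    have h3 : (0:ℝ) ≤ (S α ^ (n' + 1))⁻¹ := by
      have := hSpos hα; positivity
    exact mul_nonneg (mul_nonneg (mul_nonneg h1 h2) h3) (hPnonneg α)
  -- measurability
  have hmeas : AEStronglyMeasurable f (volume.restrict (Ioi (1:ℝ))) := by
    have hSmeas : AEMeasurable S (volume.restrict (Ioi (1:ℝ))) := by
      refine aemeasurable_of_tendsto_metrizable_ae atTop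
        (f := fun N : ℕ => fun α : ℝ => ∑ k ∈ Finset.range N, ((k + m : ℕ) : ℝ) ^ (-α))
        (fun N => ?_) ?_
      · refine Measurable.aemeasurable (Finset.measurable_sum _ fun k _ => ?_)
        have hck : (0:ℝ) < ((k + m : ℕ) : ℝ) := by
          exact_mod_cast (by omega : 0 < k + m)
        have : (fun α : ℝ => ((k + m : ℕ) : ℝ) ^ (-α)) =
            fun α : ℝ => Real.exp (Real.log ((k + m : ℕ) : ℝ) * (-α)) := by
          funext α; rw [Real.rpow_def_of_pos hck]
        rw [this]
        exact (Real.continuous_exp.comp (continuous_const.mul continuous_neg)).measurable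
      · filter_upwards [self_mem_ae_restrict measurableSet_Ioi] with α hα
        exact (stmt6_summable m hα).hasSum.tendsto_sum_nat
    have h1 : Measurable fun α : ℝ => α ^ r :=
      (continuous_id.rpow_const fun _ => Or.inr hr).measurable
    have h2 : Measurable fun α : ℝ => (α - 1)⁻¹ := (measurable_id.sub_const 1).inv
    have h4 : Measurable fun α : ℝ => ∏ i, (x i : ℝ) ^ (-α) := by
      refine Finset.measurable_prod _ fun i _ => ?_
      have : (fun α : ℝ => ((x i : ℝ)) ^ (-α)) =
          fun α : ℝ => Real.exp (Real.log (x i : ℝ) * (-α)) := by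
        funext α; rw [Real.rpow_def_of_pos (hxpos i)]
      rw [this]
      exact (Real.continuous_exp.comp (continuous_const.mul continuous_neg)).measurable
    exact ((((h1.aemeasurable.mul h2.aemeasurable).mul
      ((hSmeas.pow_const (n' + 1)).inv)).mul h4.aemeasurable)).aestronglyMeasurable
  -- Part 1 : integrable on Ioc 1 2
  have hpart1 : IntegrableOn f (Ioc (1:ℝ) 2) := by
    refine Integrable.mono' (g := fun _ => (2:ℝ) ^ r * (m:ℝ) ^ (n' + 1))
      (integrableOn_const measure_Ioc_lt_top.ne)
      (hmeas.mono_measure (Measure.restrict_mono Ioc_subset_Ioi_self le_rfl)) ?_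
    rw [ae_restrict_iff' measurableSet_Ioc]
    refine ae_of_all _ fun α hα => ?_
    obtain ⟨hα1, hα2⟩ := hα
    have ha0 : (0:ℝ) < α - 1 := by linarith
    have hlb := stmt6_lb m hxm hα1
    have hSp := hSpos hα1
    rw [Real.norm_of_nonneg (hfnonneg hα1)]
    have hkey : (α - 1)⁻¹ * (S α ^ (n' + 1))⁻¹ ≤ (m:ℝ) ^ (n' + 1) := by
      have hq0 : (0:ℝ) < (m:ℝ) ^ (1 - α) / (α - 1) :=
        div_pos (Real.rpow_pos_of_pos hM0 _) ha0
      have e1 : ((m:ℝ) ^ (1 - α) / (α - 1)) ^ (n' + 1) ≤ S α ^ (n' + 1) :=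
        pow_le_pow_left₀ hq0.le hlb _
      have e2 : (S α ^ (n' + 1))⁻¹ ≤ (((m:ℝ) ^ (1 - α) / (α - 1)) ^ (n' + 1))⁻¹ := by
        apply inv_anti₀ (by positivity) e1
      have e3 : (α - 1)⁻¹ * (((m:ℝ) ^ (1 - α) / (α - 1)) ^ (n' + 1))⁻¹
          = (α - 1) ^ n' * ((m:ℝ) ^ (α - 1)) ^ (n' + 1) := by
        have hA : ((m:ℝ) ^ (1 - α))⁻¹ = (m:ℝ) ^ (α - 1) := by
          rw [← Real.rpow_neg hM0.le, neg_sub]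
        have hA0 : (0:ℝ) < (m:ℝ) ^ (1 - α) := Real.rpow_pos_of_pos hM0 _
        rw [div_pow, ← hA]
        have h1 := ha0.ne'
        have h2 := hA0.ne'
        rw [inv_div, inv_pow, pow_succ (α - 1)]
        field_simp
      have e4 : (α - 1) ^ n' ≤ 1 := pow_le_one₀ ha0.le (by linarith)
      have e5 : ((m:ℝ) ^ (α - 1)) ^ (n' + 1) ≤ (m:ℝ) ^ (n' + 1) := by
        apply pow_le_pow_left₀ (Real.rpow_nonneg hM0.le _)
        calc (m:ℝ) ^ (α - 1) ≤ (m:ℝ) ^ (1:ℝ) :=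
              Real.rpow_le_rpow_of_exponent_le hM (by linarith)
          _ = (m:ℝ) := Real.rpow_one _
      calc (α - 1)⁻¹ * (S α ^ (n' + 1))⁻¹
          ≤ (α - 1)⁻¹ * (((m:ℝ) ^ (1 - α) / (α - 1)) ^ (n' + 1))⁻¹ := by
            apply mul_le_mul_of_nonneg_left e2 (by positivity)
        _ = (α - 1) ^ n' * ((m:ℝ) ^ (α - 1)) ^ (n' + 1) := e3
        _ ≤ 1 * (m:ℝ) ^ (n' + 1) :=
            mul_le_mul e4 e5 (by positivity) zero_le_one
        _ = (m:ℝ) ^ (n' + 1) := one_mul _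
    have hP1 : (∏ i, (x i : ℝ) ^ (-α)) ≤ 1 := by
      apply Finset.prod_le_one (fun i _ => Real.rpow_nonneg (hxpos i).le _)
      intro i _
      exact Real.rpow_le_one_of_one_le_of_nonpos (hx1 i) (by linarith)
    have har : α ^ r ≤ 2 ^ r := Real.rpow_le_rpow (by linarith) hα2 hr
    calc f α = α ^ r * ((α - 1)⁻¹ * (S α ^ (n' + 1))⁻¹) * ∏ i, (x i : ℝ) ^ (-α) := by
          rw [hf]; ring
      _ ≤ (2:ℝ) ^ r * ((m:ℝ) ^ (n' + 1)) * 1 := by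
          apply mul_le_mul _ hP1 (hPnonneg α) (by positivity)
          apply mul_le_mul har hkey (by positivity) (by positivity)
      _ = (2:ℝ) ^ r * (m:ℝ) ^ (n' + 1) := by ring
  -- Part 2 : integrable on Ioi 2
  set c : ℝ := ∏ i, (x i : ℝ) / (m : ℝ) with hc
  have hrat : ∀ i, (1:ℝ) ≤ (x i : ℝ) / (m:ℝ) := fun i =>
    (one_le_div hM0).2 (by exact_mod_cast hx i)
  have hc1 : 1 < c := by
    have h1 : (x i₀ : ℝ) / (m:ℝ) ≤ c := by
      rw [hc]
      have hle := Finset.prod_le_prod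
        (f := fun i : Fin (n' + 1) => if i = i₀ then (x i₀ : ℝ) / (m:ℝ) else 1)
        (g := fun i : Fin (n' + 1) => (x i : ℝ) / (m:ℝ)) (s := Finset.univ)
        (fun i _ => by by_cases h : i = i₀ <;>
          simp [h, le_of_lt, div_nonneg (hxpos i₀).le hM0.le, zero_le_one])
        (fun i _ => by by_cases h : i = i₀ <;> simp [h, hrat i])
      calc (x i₀ : ℝ) / (m:ℝ)
          = ∏ i : Fin (n' + 1), (if i = i₀ then (x i₀ : ℝ) / (m:ℝ) else 1) := by
            rw [Finset.prod_ite_eq' Finset.univ i₀ (fun _ => (x i₀ : ℝ) / (m:ℝ))]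
            simp
        _ ≤ ∏ i, (x i : ℝ) / (m:ℝ) := hle
    have h2 : (1:ℝ) < (x i₀ : ℝ) / (m:ℝ) := (one_lt_div hM0).2 (by exact_mod_cast hi₀)
    linarith
  have hc0 : 0 < c := by linarith
  set b : ℝ := Real.log c with hb
  have hbpos : 0 < b := Real.log_pos hc1
  have hg2 : IntegrableOn (fun α : ℝ => α ^ r * Real.exp (-(b * α))) (Ioi (2:ℝ)) := by
    apply integrable_of_isBigO_exp_neg (half_pos hbpos)
    · apply ContinuousOn.mul
      · exact ContinuousOn.rpow_const continuousOn_id fun a ha =>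
          Or.inl (by have : (2:ℝ) ≤ a := ha; positivity)
      · exact (Real.continuous_exp.comp (continuous_const.mul continuous_id).neg).continuousOn
    · have h0 : Tendsto (fun α : ℝ => α ^ r * Real.exp (-(b/2) * α)) atTop (𝓝 0) :=
        tendsto_rpow_mul_exp_neg_mul_atTop_nhds_zero r (b/2) (half_pos hbpos)
      have heq : (fun α : ℝ => α ^ r * Real.exp (-(b * α))) =
          fun α : ℝ => (α ^ r * Real.exp (-(b/2) * α)) * Real.exp (-(b/2) * α) := by
        funext α
        rw [mul_assoc, ← Real.exp_add]
        ring_nf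
      rw [heq]
      have h1 := (h0.isBigO_one ℝ).mul
        (Asymptotics.isBigO_refl (fun α : ℝ => Real.exp (-(b/2) * α)) atTop)
      exact h1.congr' Filter.EventuallyEq.rfl
        (Filter.Eventually.of_forall fun x => one_mul _)
  have hpart2 : IntegrableOn f (Ioi (2:ℝ)) := by
    refine hg2.mono'
      (hmeas.mono_measure (Measure.restrict_mono (Ioi_subset_Ioi one_le_two) le_rfl)) ?_
    rw [ae_restrict_iff' measurableSet_Ioi]
    refine ae_of_all _ fun α hα => ?_
    have hα2 : (2:ℝ) < α := hα
    have hα1 : (1:ℝ) < α := by linarith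
    have hSp := hSpos hα1
    rw [Real.norm_of_nonneg (hfnonneg hα1)]
    have hS0 : (m:ℝ) ^ (-α) ≤ S α := by
      have := Summable.le_tsum (stmt6_summable m hα1) 0
        (fun k _ => Real.rpow_nonneg (by positivity) _)
      simpa only [Nat.zero_add] using this
    have hinv1 : (α - 1)⁻¹ ≤ 1 := by
      rw [inv_le_one_iff₀]; right; linarith
    have hSinv : (S α ^ (n' + 1))⁻¹ ≤ ((m:ℝ) ^ α) ^ (n' + 1) := by
      have e1 : ((m:ℝ) ^ (-α)) ^ (n' + 1) ≤ S α ^ (n' + 1) :=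
        pow_le_pow_left₀ (Real.rpow_nonneg hM0.le _) hS0 _
      have e2 : (S α ^ (n' + 1))⁻¹ ≤ (((m:ℝ) ^ (-α)) ^ (n' + 1))⁻¹ := by
        apply inv_anti₀ (by positivity) e1
      have e3 : (((m:ℝ) ^ (-α)) ^ (n' + 1))⁻¹ = ((m:ℝ) ^ α) ^ (n' + 1) := by
        rw [← inv_pow, ← Real.rpow_neg hM0.le, neg_neg]
      linarith [e2, e3.le]
    have hprod : ((m:ℝ) ^ α) ^ (n' + 1) * (∏ i, (x i : ℝ) ^ (-α)) = Real.exp (-(b * α)) := by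
      have e1 : ((m:ℝ) ^ α) ^ (n' + 1) = ∏ _i : Fin (n' + 1), (m:ℝ) ^ α := by
        rw [Finset.prod_const, Finset.card_univ, Fintype.card_fin]
      rw [e1, ← Finset.prod_mul_distrib]
      have e2 : ∀ i : Fin (n' + 1),
          (m:ℝ) ^ α * (x i : ℝ) ^ (-α) = ((x i : ℝ) / (m:ℝ)) ^ (-α) := by
        intro i
        rw [Real.div_rpow (hxpos i).le hM0.le, Real.rpow_neg hM0.le,
          Real.rpow_neg (hxpos i).le]
        field_simp
      rw [Finset.prod_congr rfl (fun i _ => e2 i),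
        Real.finset_prod_rpow _ _ (fun i _ => div_nonneg (hxpos i).le hM0.le) (-α), ← hc,
        Real.rpow_def_of_pos hc0]
      congr 1
      rw [hb]; ring
    calc f α = α ^ r * (α - 1)⁻¹ * (S α ^ (n' + 1))⁻¹ * ∏ i, (x i : ℝ) ^ (-α) := rfl
      _ ≤ α ^ r * 1 * (((m:ℝ) ^ α) ^ (n' + 1)) * ∏ i, (x i : ℝ) ^ (-α) := by
          apply mul_le_mul_of_nonneg_right _ (hPnonneg α)
          apply mul_le_mul _ hSinv (by positivity) (by positivity)
          apply mul_le_mul_of_nonneg_left hinv1 (Real.rpow_nonneg (by linarith) _)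
      _ = α ^ r * (((m:ℝ) ^ α) ^ (n' + 1) * ∏ i, (x i : ℝ) ^ (-α)) := by ring
      _ = α ^ r * Real.exp (-(b * α)) := by rw [hprod]
  have hcover : Ioi (1:ℝ) = Ioc (1:ℝ) 2 ∪ Ioi (2:ℝ) := (Ioc_union_Ioi_eq_Ioi one_le_two).symm
  have : IntegrableOn f (Ioi (1:ℝ)) := by
    rw [hcover]
    exact hpart1.union hpart2
  exact this
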